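/- Let 𝓜 : ℝ^m → ℝ^m be a Σ∆ map with input x ∈ ℝ whose partition sets Ω_i are Lebesgue measurable, and let Γ ⊆ ℝ^m be a bounded Lebesgue measurable set with 𝓜(Γ) = Γ. Then the restriction of 𝓜 to Γ preserves Lebesgue measure: for every Lebesgue measurable B ⊆ Γ, the Lebesgue measure of 𝓜^{-1}(B) ∩ Γ equals the Lebesgue measure of B. -/

import Mathlib

open MeasureTheory

noncomputable section

/-- The m×m lower-triangular matrix of ones: `L i j = 1` iff `j ≤ i`. -/
def Lmat (m : ℕ) : Matrix (Fin m) (Fin m) ℝ :=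
  fun i j => if j ≤ i then 1 else 0

/-- A Σ∆ map with input `x` whose partition pieces are Lebesgue measurable. -/
def IsMeasSigmaDeltaMap (m : ℕ) (x : ℝ) (M : (Fin m → ℝ) → (Fin m → ℝ)) : Prop :=
  ∃ (K : ℕ) (Ω : Fin K → Set (Fin m → ℝ)) (d : Fin K → (Fin m → ℤ)),
    (∀ i, MeasurableSet (Ω i)) ∧
    (∀ v, ∃! i, v ∈ Ω i) ∧
    ∀ i, ∀ v ∈ Ω i, M v = (Lmat m).mulVec v + (fun _ => x) + (fun j => (d i j : ℝ))

lemma Lmat_det (m : ℕ) : (Lmat m).det = 1 := by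
  rw [Matrix.det_of_lowerTriangular (Lmat m)]
  · simp [Lmat]
  · intro i j hij
    simp only [Lmat, ite_eq_right_iff]
    intro h
    exact absurd h (not_le.mpr hij)

/-- The one-sided inequality: for measurable `B' ⊆ Γ`, the preimage within `Γ` is
measurable and at least as large as `B'`. -/
lemma sigma_delta_aux (m : ℕ) (x : ℝ)
    (M : (Fin m → ℝ) → (Fin m → ℝ)) (hM : IsMeasSigmaDeltaMap m x M)
    (Γ : Set (Fin m → ℝ)) (hmeas : MeasurableSet Γ) (hinv : M '' Γ = Γ)
    (B : Set (Fin m → ℝ)) (hB : MeasurableSet B) (hBΓ : B ⊆ Γ) :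
    MeasurableSet (M ⁻¹' B ∩ Γ) ∧ volume B ≤ volume (M ⁻¹' B ∩ Γ) := by
  obtain ⟨K, Ω, d, hΩmeas, hpart, hMform⟩ := hM
  set T : (Fin m → ℝ) →ₗ[ℝ] (Fin m → ℝ) := Matrix.toLin' (Lmat m) with hT
  have hdet : LinearMap.det T = 1 := by
    rw [hT, LinearMap.det_toLin', Lmat_det]
  set c : Fin K → (Fin m → ℝ) := fun i => (fun _ => x) + (fun j => (d i j : ℝ)) with hc
  set f : Fin K → (Fin m → ℝ) → (Fin m → ℝ) := fun i v => T v + c i with hf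
  have hMf : ∀ i, ∀ v ∈ Ω i, M v = f i v := by
    intro i v hv
    rw [hMform i v hv, hf, hT]
    simp only [Matrix.toLin'_apply, hc]
    abel
  have hfcont : ∀ i, Continuous (f i) := fun i =>
    (T.continuous_of_finiteDimensional).add continuous_const
  set A : Fin K → Set (Fin m → ℝ) := fun i => M ⁻¹' B ∩ Γ ∩ Ω i with hA
  have hAeq : ∀ i, A i = (f i ⁻¹' B ∩ Γ) ∩ Ω i := by
    intro i
    ext v
    simp only [hA, Set.mem_inter_iff, Set.mem_preimage]
    constructor
    · rintro ⟨⟨h1, h2⟩, h3⟩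
      exact ⟨⟨by rwa [← hMf i v h3], h2⟩, h3⟩
    · rintro ⟨⟨h1, h2⟩, h3⟩
      exact ⟨⟨by rwa [hMf i v h3], h2⟩, h3⟩
  have hAmeas : ∀ i, MeasurableSet (A i) := by
    intro i
    rw [hAeq i]
    exact ((((hfcont i).measurable) hB).inter hmeas).inter (hΩmeas i)
  have hUnion : M ⁻¹' B ∩ Γ = ⋃ i, A i := by
    ext v
    simp only [Set.mem_iUnion, hA, Set.mem_inter_iff]
    constructor
    · rintro ⟨h1, h2⟩
      obtain ⟨i, hi, -⟩ := hpart v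
      exact ⟨i, ⟨h1, h2⟩, hi⟩
    · rintro ⟨i, ⟨h1, h2⟩, -⟩
      exact ⟨h1, h2⟩
  have hdisj : Pairwise (Function.onFun Disjoint A) := by
    intro i j hij
    refine Set.disjoint_left.mpr ?_
    rintro v ⟨-, hvi⟩ ⟨-, hvj⟩
    obtain ⟨k, -, hk⟩ := hpart v
    exact hij ((hk i hvi).trans (hk j hvj).symm)
  have hmeasU : MeasurableSet (M ⁻¹' B ∩ Γ) := by
    rw [hUnion]; exact MeasurableSet.iUnion hAmeas
  refine ⟨hmeasU, ?_⟩
  -- volume of image of each piece equals volume of the piece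
  have himg : ∀ i, volume (M '' A i) = volume (A i) := by
    intro i
    have h1 : M '' A i = f i '' A i := by
      apply Set.image_congr
      intro v hv
      exact hMf i v hv.2
    have h2 : f i '' A i = (· + c i) '' (T '' A i) := by
      rw [← Set.image_comp]; rfl
    rw [h1, h2, Set.image_add_right, measure_preimage_add_right,
      Measure.addHaar_image_linearMap, hdet]
    simp
  -- B is covered by the images
  have hBsub : B ⊆ ⋃ i, M '' A i := by
    intro b hb
    have : b ∈ M '' Γ := hinv.symm ▸ hBΓ hb
    obtain ⟨v, hvΓ, hvb⟩ := this
    obtain ⟨i, hi, -⟩ := hpart v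
    exact Set.mem_iUnion.mpr ⟨i, v, ⟨⟨by simp [Set.mem_preimage, hvb, hb], hvΓ⟩, hi⟩, hvb⟩
  calc volume B ≤ volume (⋃ i, M '' A i) := measure_mono hBsub
    _ ≤ ∑ i, volume (M '' A i) := measure_iUnion_fintype_le _ _
    _ = ∑ i, volume (A i) := by simp_rw [himg]
    _ = volume (⋃ i, A i) := by rw [measure_iUnion hdisj hAmeas, tsum_fintype]
    _ = volume (M ⁻¹' B ∩ Γ) := by rw [hUnion]

/-- if `Γ` is a bounded measurable set with `M(Γ) = Γ`, then the restriction
of `M` to `Γ` preserves Lebesgue measure: for every measurable `B ⊆ Γ`,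
`vol (M⁻¹(B) ∩ Γ) = vol B`. -/
theorem sigma_delta_measure_preserving (m : ℕ) (hm : 1 ≤ m) (x : ℝ)
    (M : (Fin m → ℝ) → (Fin m → ℝ)) (hM : IsMeasSigmaDeltaMap m x M)
    (Γ : Set (Fin m → ℝ)) (hbdd : Bornology.IsBounded Γ)
    (hmeas : MeasurableSet Γ) (hinv : M '' Γ = Γ)
    (B : Set (Fin m → ℝ)) (hB : MeasurableSet B) (hBΓ : B ⊆ Γ) :
    volume (M ⁻¹' B ∩ Γ) = volume B := by
  obtain ⟨hmB, hleB⟩ := sigma_delta_aux m x M hM Γ hmeas hinv B hB hBΓ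
  obtain ⟨hmC, hleC⟩ := sigma_delta_aux m x M hM Γ hmeas hinv (Γ \ B)
    (hmeas.diff hB) Set.diff_subset
  have hΓfin : volume Γ < ⊤ := hbdd.measure_lt_top
  have hΓsubpre : Γ ⊆ M ⁻¹' Γ := by
    intro v hv
    have : M v ∈ M '' Γ := Set.mem_image_of_mem M hv
    rwa [hinv] at this
  have hcover : (M ⁻¹' B ∩ Γ) ∪ (M ⁻¹' (Γ \ B) ∩ Γ) = Γ := by
    ext v
    constructor
    · rintro (⟨-, h⟩ | ⟨-, h⟩) <;> exact h
    · intro hv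
      by_cases h : M v ∈ B
      · exact Or.inl ⟨h, hv⟩
      · exact Or.inr ⟨⟨hΓsubpre hv, h⟩, hv⟩
  have hdis : Disjoint (M ⁻¹' B ∩ Γ) (M ⁻¹' (Γ \ B) ∩ Γ) := by
    refine Set.disjoint_left.mpr ?_
    rintro v ⟨h1, -⟩ ⟨⟨-, h2⟩, -⟩
    exact h2 h1
  have hsum : volume (M ⁻¹' B ∩ Γ) + volume (M ⁻¹' (Γ \ B) ∩ Γ) = volume Γ := by
    rw [← measure_union hdis hmC, hcover]
  have hΓsum : volume B + volume (Γ \ B) = volume Γ := by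
    rw [← measure_union (Set.disjoint_sdiff_right) (hmeas.diff hB),
      Set.union_diff_cancel hBΓ]
  have hCfin : volume (M ⁻¹' (Γ \ B) ∩ Γ) ≠ ⊤ :=
    ((measure_mono Set.inter_subset_right).trans_lt hΓfin).ne
  refine le_antisymm ?_ hleB
  have : volume (M ⁻¹' B ∩ Γ) + volume (M ⁻¹' (Γ \ B) ∩ Γ)
      ≤ volume B + volume (M ⁻¹' (Γ \ B) ∩ Γ) := by
    rw [hsum, ← hΓsum]
    exact add_le_add le_rfl hleC
  exact (ENNReal.add_le_add_iff_right hCfin).mp this
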